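/- For all σ > 0, ρ > 0, and integers s, d with 1 ≤ s ≤ d, the following holds. Let f be the density on ℝ^d of d i.i.d. N(0,σ²) variables, i.e. f(y) = ∏_{j=1}^d φ_σ(y_j) where φ_σ is the N(0,σ²) density, and let g(y) = C(d,s)^{-1} Σ_{I} ∏_{j=1}^d φ_σ(y_j − σρ·1{j ∈ I}), the sum being over all subsets I of {1,…,d} of cardinality s and C(d,s) the binomial coefficient. Then ∫_{ℝ^d} g(y)²/f(y) dy − 1 ≤ (1 − s/d + (s/d)·e^{ρ²})^s − 1. -/

import Mathlib

open MeasureTheory ProbabilityTheory Real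
open scoped ENNReal NNReal BigOperators

noncomputable section

/-- The density of the one-dimensional normal distribution `N(0, σ²)`. -/
def normalDensity (σ t : ℝ) : ℝ :=
  (Real.sqrt (2 * Real.pi * σ ^ 2))⁻¹ * Real.exp (-(t ^ 2) / (2 * σ ^ 2))

/-- The density `f` on `ℝ^d` of `d` i.i.d. `N(0,σ²)` variables. -/
def densF (d : ℕ) (σ : ℝ) (y : Fin d → ℝ) : ℝ :=
  ∏ j, normalDensity σ (y j)

/-- The density `g` on `ℝ^d` of the mixture, over a subset `I` of `{1,…,d}` of cardinality
`s` chosen uniformly at random, of the Gaussian measures `N(θ_I, σ² I_d)` where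
`θ_I` has coordinates `σρ` on `I` and `0` elsewhere. -/
def densG (d s : ℕ) (σ ρ : ℝ) (y : Fin d → ℝ) : ℝ :=
  ((d.choose s : ℝ))⁻¹ *
    ∑ I ∈ (Finset.univ : Finset (Fin d)).powersetCard s,
      ∏ j, normalDensity σ (y j - σ * ρ * (if j ∈ I then 1 else 0))

end

lemma normalDensity_pos {σ : ℝ} (hσ : 0 < σ) (t : ℝ) : 0 < normalDensity σ t := by
  unfold normalDensity
  have h : 0 < 2 * Real.pi * σ ^ 2 := by positivity
  positivity

lemma normalDensity_mul_div {σ : ℝ} (hσ : 0 < σ) (a b t : ℝ) :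
    normalDensity σ (t - a) * normalDensity σ (t - b) / normalDensity σ t
      = Real.exp (a * b / σ ^ 2) * normalDensity σ (t - (a + b)) := by
  unfold normalDensity
  have hc : 0 < Real.sqrt (2 * Real.pi * σ ^ 2) := by
    have h : 0 < 2 * Real.pi * σ ^ 2 := by positivity
    positivity
  have hs : (σ:ℝ)^2 ≠ 0 := by positivity
  rw [div_eq_iff (by positivity)]
  set c := (Real.sqrt (2 * Real.pi * σ ^ 2))⁻¹ with hcdef
  have key : -(t-a)^2/(2*σ^2) + -(t-b)^2/(2*σ^2)
      = a*b/σ^2 + (-(t-(a+b))^2/(2*σ^2) + -t^2/(2*σ^2)) := by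
    field_simp
    ring
  calc (c * rexp (-(t-a)^2/(2*σ^2))) * (c * rexp (-(t-b)^2/(2*σ^2)))
      = (c * c) * rexp (-(t-a)^2/(2*σ^2) + -(t-b)^2/(2*σ^2)) := by rw [Real.exp_add]; ring
    _ = (c * c) * rexp (a*b/σ^2 + (-(t-(a+b))^2/(2*σ^2) + -t^2/(2*σ^2))) := by rw [key]
    _ = rexp (a*b/σ^2) * (c * rexp (-(t-(a+b))^2/(2*σ^2))) * (c * rexp (-t^2/(2*σ^2))) := by
        rw [Real.exp_add, Real.exp_add]; ring

lemma lintegral_normalDensity {σ : ℝ} (hσ : 0 < σ) (c : ℝ) :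
    ∫⁻ t : ℝ, ENNReal.ofReal (normalDensity σ (t - c)) = 1 := by
  have hv : ((σ^2).toNNReal : ℝ≥0) ≠ 0 := by
    simp [Real.toNNReal_eq_zero]
    positivity
  have h := ProbabilityTheory.lintegral_gaussianPDF_eq_one c hv
  rw [← h]
  congr 1
  ext t
  rw [ProbabilityTheory.gaussianPDF]
  congr 1
  unfold normalDensity ProbabilityTheory.gaussianPDFReal
  rw [Real.coe_toNNReal _ (by positivity : (0:ℝ) ≤ σ^2)]

lemma lintegral_pi_prod : ∀ (d : ℕ) (F : Fin d → ℝ → ℝ≥0∞), (∀ j, Measurable (F j)) →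
    ∫⁻ y : Fin d → ℝ, ∏ j, F j (y j) = ∏ j, ∫⁻ t, F j t := by
  intro d
  induction d with
  | zero =>
    intro F _
    simp [lintegral_const, volume_pi, Measure.pi_univ]
  | succ n ih =>
    intro F hF
    have hmp := (MeasureTheory.volume_preserving_piFinSuccAbove (fun _ : Fin (n+1) => ℝ) 0)
    have key : ∫⁻ y : Fin (n+1) → ℝ, ∏ j, F j (y j)
        = ∫⁻ z : ℝ × (Fin n → ℝ), F 0 z.1 * ∏ j, F (Fin.succ j) (z.2 j) := by
      rw [hmp.lintegral_map_equiv (fun z : ℝ × (Fin n → ℝ) => F 0 z.1 * ∏ j, F (Fin.succ j) (z.2 j))]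
      congr 1
      ext y
      rw [Fin.prod_univ_succ]
      rfl
    have hmeas : AEMeasurable (fun z : Fin n → ℝ => ∏ j, F (Fin.succ j) (z j))
        (volume : Measure (Fin n → ℝ)) := by
      exact (Finset.measurable_prod Finset.univ
        (fun j _ => (hF j.succ).comp (measurable_pi_apply j))).aemeasurable
    rw [key, Measure.volume_eq_prod, lintegral_prod_mul ((hF 0).aemeasurable) hmeas,
      ih (fun j => F j.succ) (fun j => hF j.succ), Fin.prod_univ_succ]

lemma nat_choose_bound : ∀ (k s d : ℕ), k ≤ s → s ≤ d → (d-k).choose (s-k) * d^k ≤ d.choose s * s^k := by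
  intro k
  induction k with
  | zero => simp
  | succ k ih =>
    intro s d hk hsd
    have hks : k < s := hk
    have hkd : k < d := lt_of_lt_of_le hks hsd
    have h1 := ih s d hks.le hsd
    have hid : (d - k) * ((d - (k+1)).choose (s - (k+1))) = (s - k) * (d - k).choose (s - k) := by
      have h := Nat.add_one_mul_choose_eq (d - k - 1) (s - k - 1)
      have hd1 : d - k - 1 + 1 = d - k := by omega
      have hs1 : s - k - 1 + 1 = s - k := by omega
      rw [hd1, hs1] at h
      have e1 : d - (k+1) = d - k - 1 := by omega
      have e2 : s - (k+1) = s - k - 1 := by omega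
      rw [e1, e2, h, mul_comm]
    have hpos : 0 < d - k := by omega
    have hkey : (s - k) * d ≤ s * (d - k) := by
      calc (s - k) * d = s * d - k * d := Nat.sub_mul _ _ _
        _ ≤ s * d - k * s := Nat.sub_le_sub_left (Nat.mul_le_mul_left k hsd) _
        _ = s * d - s * k := by rw [mul_comm k s]
        _ = s * (d - k) := (Nat.mul_sub s d k).symm
    refine Nat.le_of_mul_le_mul_left ?_ hpos
    calc (d - k) * ((d - (k+1)).choose (s - (k+1)) * d ^ (k+1))
        = ((s - k) * (d - k).choose (s - k)) * d ^ (k+1) := by rw [← mul_assoc, hid]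
      _ = ((s - k) * d) * ((d - k).choose (s - k) * d ^ k) := by ring
      _ ≤ ((s - k) * d) * (d.choose s * s ^ k) := Nat.mul_le_mul_left _ h1
      _ ≤ (s * (d - k)) * (d.choose s * s ^ k) := Nat.mul_le_mul_right _ hkey
      _ = (d - k) * (d.choose s * s ^ (k+1)) := by ring

lemma count_supersets {d : ℕ} (s : ℕ) (T : Finset (Fin d)) (hT : T.card ≤ s) :
    ((Finset.univ.powersetCard s).filter (fun I => T ⊆ I)).card
      = (d - T.card).choose (s - T.card) := by
  have hcard : (Finset.univ \ T).card = d - T.card := by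
    rw [Finset.card_sdiff_of_subset (Finset.subset_univ T), Finset.card_univ, Fintype.card_fin]
  rw [← hcard, ← Finset.card_powersetCard]
  apply Finset.card_bij' (fun I _ => I \ T) (fun S _ => S ∪ T)
  · intro I hI
    simp only [Finset.mem_filter, Finset.mem_powersetCard] at hI
    obtain ⟨⟨-, hcard⟩, hTI⟩ := hI
    simp only [Finset.mem_powersetCard]
    constructor
    · exact Finset.sdiff_subset_sdiff (Finset.subset_univ I) le_rfl
    · rw [Finset.card_sdiff_of_subset hTI, hcard]
  · intro S hS
    simp only [Finset.mem_powersetCard] at hS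
    obtain ⟨hSsub, hScard⟩ := hS
    have hdisj : Disjoint S T := by
      refine Finset.disjoint_left.mpr fun a haS haT => ?_
      have := hSsub haS
      simp [Finset.mem_sdiff, haT] at this
    simp only [Finset.mem_filter, Finset.mem_powersetCard]
    refine ⟨⟨Finset.subset_univ _, ?_⟩, Finset.subset_union_right⟩
    rw [Finset.card_union_of_disjoint hdisj, hScard]
    omega
  · intro I hI
    simp only [Finset.mem_filter, Finset.mem_powersetCard] at hI
    exact Finset.sdiff_union_of_subset hI.2
  · intro S hS
    simp only [Finset.mem_powersetCard] at hS
    have hdisj : Disjoint S T := by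
      refine Finset.disjoint_left.mpr fun a haS haT => ?_
      have := hS.1 haS
      simp [Finset.mem_sdiff, haT] at this
    exact Finset.union_sdiff_cancel_right hdisj

lemma sum_powerset_pow {α : Type*} [DecidableEq α] (x : ℝ) (S : Finset α) :
    ∑ T ∈ S.powerset, x ^ T.card = (x + 1) ^ S.card := by
  rw [← Finset.prod_const (b := x + 1), Finset.prod_add]
  refine Finset.sum_congr rfl fun T _ => ?_
  simp [Finset.prod_const]

lemma sum_lam_bound (s d : ℕ) (hs : 1 ≤ s) (hsd : s ≤ d) (lam : ℝ) (hlam : 1 ≤ lam)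
    (J : Finset (Fin d)) (hJ : J.card = s) :
    ∑ I ∈ Finset.univ.powersetCard s, lam ^ (I ∩ J).card
      ≤ (d.choose s : ℝ) * ((s:ℝ)/(d:ℝ) * (lam - 1) + 1) ^ s := by
  have hd : (0:ℝ) < d := by exact_mod_cast Nat.lt_of_lt_of_le hs hsd
  have hlam0 : (0:ℝ) ≤ lam - 1 := by linarith
  have step12 : ∀ I ∈ Finset.univ.powersetCard s, lam ^ (I ∩ J).card
      = ∑ T ∈ J.powerset, (if T ⊆ I then (lam - 1) ^ T.card else 0) := by
    intro I _
    have hfilt : J.powerset.filter (fun T => T ⊆ I) = (I ∩ J).powerset := by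
      ext T
      simp only [Finset.mem_filter, Finset.mem_powerset, Finset.subset_inter_iff]
      tauto
    rw [← Finset.sum_filter, hfilt, sum_powerset_pow, sub_add_cancel]
  rw [Finset.sum_congr rfl step12, Finset.sum_comm]
  have count : ∀ T ∈ J.powerset,
      (∑ I ∈ Finset.univ.powersetCard s, (if T ⊆ I then (lam - 1) ^ T.card else 0))
        = ((d - T.card).choose (s - T.card) : ℝ) * (lam - 1) ^ T.card := by
    intro T hT
    have hTs : T.card ≤ s := by
      rw [← hJ]; exact Finset.card_le_card (Finset.mem_powerset.mp hT)
    rw [← Finset.sum_filter, Finset.sum_const, count_supersets s T hTs, nsmul_eq_mul]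
  rw [Finset.sum_congr rfl count]
  have bound : ∀ T ∈ J.powerset,
      ((d - T.card).choose (s - T.card) : ℝ) * (lam - 1) ^ T.card
        ≤ (d.choose s : ℝ) * ((s:ℝ)/(d:ℝ) * (lam - 1)) ^ T.card := by
    intro T hT
    have hTs : T.card ≤ s := by
      rw [← hJ]; exact Finset.card_le_card (Finset.mem_powerset.mp hT)
    have hnat := nat_choose_bound T.card s d hTs hsd
    have hcast : ((d - T.card).choose (s - T.card) : ℝ) * (d:ℝ) ^ T.card
        ≤ (d.choose s : ℝ) * (s:ℝ) ^ T.card := by exact_mod_cast hnat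
    have hdpow : (0:ℝ) < (d:ℝ) ^ T.card := by positivity
    have h' : ((d - T.card).choose (s - T.card) : ℝ)
        ≤ (d.choose s : ℝ) * (s:ℝ) ^ T.card / (d:ℝ) ^ T.card :=
      (le_div_iff₀ hdpow).mpr hcast
    calc ((d - T.card).choose (s - T.card) : ℝ) * (lam - 1) ^ T.card
        ≤ ((d.choose s : ℝ) * (s:ℝ) ^ T.card / (d:ℝ) ^ T.card) * (lam - 1) ^ T.card :=
          mul_le_mul_of_nonneg_right h' (pow_nonneg hlam0 _)
      _ = (d.choose s : ℝ) * ((s:ℝ)/(d:ℝ) * (lam - 1)) ^ T.card := by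
          rw [mul_pow, div_pow]; ring
  calc ∑ T ∈ J.powerset, ((d - T.card).choose (s - T.card) : ℝ) * (lam - 1) ^ T.card
      ≤ ∑ T ∈ J.powerset, (d.choose s : ℝ) * ((s:ℝ)/(d:ℝ) * (lam - 1)) ^ T.card :=
        Finset.sum_le_sum bound
    _ = (d.choose s : ℝ) * ((s:ℝ)/(d:ℝ) * (lam - 1) + 1) ^ s := by
        rw [← Finset.mul_sum, sum_powerset_pow, hJ]

lemma pointwise_eq (s d : ℕ) (σ ρ : ℝ) (hσ : 0 < σ) (y : Fin d → ℝ) :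
    densG d s σ ρ y ^ 2 / densF d σ y
      = ∑ p ∈ ((Finset.univ : Finset (Fin d)).powersetCard s) ×ˢ
            ((Finset.univ : Finset (Fin d)).powersetCard s),
          ((d.choose s : ℝ))⁻¹ * ((d.choose s : ℝ))⁻¹ * Real.exp (ρ ^ 2) ^ (p.1 ∩ p.2).card *
            ∏ j, normalDensity σ (y j -
              (σ * ρ * (if j ∈ p.1 then 1 else 0) + σ * ρ * (if j ∈ p.2 then 1 else 0))) := by
  have key : ∀ I J : Finset (Fin d),
      (∏ j, normalDensity σ (y j - σ * ρ * (if j ∈ I then 1 else 0))) *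
        (∏ j, normalDensity σ (y j - σ * ρ * (if j ∈ J then 1 else 0))) / densF d σ y
      = Real.exp (ρ ^ 2) ^ (I ∩ J).card *
          ∏ j, normalDensity σ (y j -
            (σ * ρ * (if j ∈ I then 1 else 0) + σ * ρ * (if j ∈ J then 1 else 0))) := by
    intro I J
    unfold densF
    rw [← Finset.prod_mul_distrib, ← Finset.prod_div_distrib]
    have hper : ∀ j ∈ (Finset.univ : Finset (Fin d)),
        normalDensity σ (y j - σ * ρ * (if j ∈ I then 1 else 0)) *
          normalDensity σ (y j - σ * ρ * (if j ∈ J then 1 else 0)) / normalDensity σ (y j)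
        = (if j ∈ I ∩ J then Real.exp (ρ ^ 2) else 1) *
            normalDensity σ (y j -
              (σ * ρ * (if j ∈ I then 1 else 0) + σ * ρ * (if j ∈ J then 1 else 0))) := by
      intro j _
      rw [normalDensity_mul_div hσ]
      congr 1
      have hσ2 : (σ:ℝ) ^ 2 ≠ 0 := by positivity
      by_cases hI : j ∈ I <;> by_cases hJ : j ∈ J <;>
        simp only [hI, hJ, Finset.mem_inter, if_true, if_false, true_and, false_and,
          and_false, mul_one, mul_zero, zero_mul, mul_zero, zero_div, Real.exp_zero]
      · congr 1
        field_simp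
    rw [Finset.prod_congr rfl hper, Finset.prod_mul_distrib, Finset.prod_ite_mem,
      Finset.univ_inter, Finset.prod_const]
  have expand : densG d s σ ρ y ^ 2 = ((d.choose s : ℝ))⁻¹ * ((d.choose s : ℝ))⁻¹ *
      ∑ p ∈ ((Finset.univ : Finset (Fin d)).powersetCard s) ×ˢ
          ((Finset.univ : Finset (Fin d)).powersetCard s),
        (∏ j, normalDensity σ (y j - σ * ρ * (if j ∈ p.1 then 1 else 0))) *
          (∏ j, normalDensity σ (y j - σ * ρ * (if j ∈ p.2 then 1 else 0))) := by
    unfold densG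
    rw [Finset.sum_product]
    dsimp only
    rw [sq, mul_mul_mul_comm, Finset.sum_mul_sum]
  rw [expand, mul_div_assoc, Finset.sum_div, Finset.mul_sum]
  refine Finset.sum_congr rfl fun p _ => ?_
  rw [key p.1 p.2]
  ring

/-- Lemma 7.1 (chi-square divergence bound): for all `σ, ρ > 0` and `1 ≤ s ≤ d`,
`∫ g²/f − 1 ≤ (1 − s/d + (s/d) e^{ρ²})^s − 1`, stated equivalently (adding `1` to both
sides) as `∫ g²/f ≤ (1 − s/d + (s/d) e^{ρ²})^s`, with the integral over `ℝ^d` taken in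
the Lebesgue sense to avoid integrability caveats. -/
theorem chi_square_divergence_bound (s d : ℕ) (hs : 1 ≤ s) (hsd : s ≤ d)
    (σ ρ : ℝ) (hσ : 0 < σ) (hρ : 0 < ρ) :
    (∫⁻ y : Fin d → ℝ, ENNReal.ofReal ((densG d s σ ρ y) ^ 2 / densF d σ y))
      ≤ ENNReal.ofReal
          ((1 - (s : ℝ) / (d : ℝ) + ((s : ℝ) / (d : ℝ)) * Real.exp (ρ ^ 2)) ^ s) := by
  set P := (Finset.univ : Finset (Fin d)).powersetCard s with hP
  set Cinv : ℝ := ((d.choose s : ℝ))⁻¹ with hCinv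
  set lam : ℝ := Real.exp (ρ ^ 2) with hlam
  have hlam1 : 1 ≤ lam := by
    rw [hlam]; nlinarith [Real.exp_pos (ρ^2), Real.add_one_le_exp (ρ^2), sq_nonneg ρ]
  have hCpos : 0 < (d.choose s : ℝ) := by
    exact_mod_cast Nat.choose_pos hsd
  have hCinv0 : 0 ≤ Cinv := by rw [hCinv]; positivity
  -- constants and means
  set c : Finset (Fin d) × Finset (Fin d) → ℝ :=
    fun p => Cinv * Cinv * lam ^ (p.1 ∩ p.2).card with hc
  set m : Finset (Fin d) × Finset (Fin d) → Fin d → ℝ :=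
    fun p j => σ * ρ * (if j ∈ p.1 then 1 else 0) + σ * ρ * (if j ∈ p.2 then 1 else 0) with hm
  have hc0 : ∀ p, 0 ≤ c p := by
    intro p; rw [hc]
    have : (0:ℝ) < lam := lt_of_lt_of_le one_pos hlam1
    positivity
  have hcont : Continuous (normalDensity σ) := by
    unfold normalDensity
    fun_prop
  have hmeas : ∀ p : Finset (Fin d) × Finset (Fin d),
      Measurable (fun y : Fin d → ℝ =>
        ENNReal.ofReal (c p * ∏ j, normalDensity σ (y j - m p j))) := by
    intro p
    apply ENNReal.measurable_ofReal.comp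
    apply Measurable.const_mul
    exact Finset.measurable_prod _ fun j _ =>
      (hcont.measurable.comp ((measurable_pi_apply j).sub_const _))
  -- rewrite integrand
  have hpt : (fun y : Fin d → ℝ => ENNReal.ofReal ((densG d s σ ρ y) ^ 2 / densF d σ y))
      = fun y => ∑ p ∈ P ×ˢ P,
          ENNReal.ofReal (c p * ∏ j, normalDensity σ (y j - m p j)) := by
    funext y
    rw [pointwise_eq s d σ ρ hσ y, ENNReal.ofReal_sum_of_nonneg]
    intro p _
    have h1 : 0 ≤ ∏ j, normalDensity σ (y j - m p j) :=
      Finset.prod_nonneg fun j _ => (normalDensity_pos hσ _).le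
    exact mul_nonneg (hc0 p) h1
  rw [hpt, lintegral_finset_sum _ (fun p _ => hmeas p)]
  -- compute each integral
  have hint : ∀ p ∈ P ×ˢ P,
      (∫⁻ y : Fin d → ℝ, ENNReal.ofReal (c p * ∏ j, normalDensity σ (y j - m p j)))
        = ENNReal.ofReal (c p) := by
    intro p _
    have h1 : ∀ y : Fin d → ℝ, ENNReal.ofReal (c p * ∏ j, normalDensity σ (y j - m p j))
        = ENNReal.ofReal (c p) * ∏ j, ENNReal.ofReal (normalDensity σ (y j - m p j)) := by
      intro y
      rw [ENNReal.ofReal_mul (hc0 p), ENNReal.ofReal_prod_of_nonneg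
        (fun j _ => (normalDensity_pos hσ _).le)]
    simp_rw [h1]
    rw [lintegral_const_mul' _ _ ENNReal.ofReal_ne_top,
      lintegral_pi_prod d (fun j t => ENNReal.ofReal (normalDensity σ (t - m p j)))
        (fun j => ENNReal.measurable_ofReal.comp
          (hcont.measurable.comp (measurable_id.sub_const _)))]
    have : ∀ j : Fin d, (∫⁻ t : ℝ, ENNReal.ofReal (normalDensity σ (t - m p j))) = 1 :=
      fun j => lintegral_normalDensity hσ (m p j)
    simp [this]
  rw [Finset.sum_congr rfl hint, ← ENNReal.ofReal_sum_of_nonneg (fun p _ => hc0 p)]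
  apply ENNReal.ofReal_le_ofReal
  -- combinatorial bound
  have hsum : ∑ p ∈ P ×ˢ P, c p
      = Cinv * Cinv * ∑ J ∈ P, ∑ I ∈ P, lam ^ (I ∩ J).card := by
    rw [Finset.mul_sum, Finset.sum_product]
    rw [Finset.sum_comm]
    refine Finset.sum_congr rfl fun J _ => ?_
    rw [Finset.mul_sum]
  rw [hsum]
  have hbound : ∑ J ∈ P, ∑ I ∈ P, lam ^ (I ∩ J).card
      ≤ (d.choose s : ℝ) * ((d.choose s : ℝ) * ((s:ℝ)/(d:ℝ) * (lam - 1) + 1) ^ s) := by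
    have hcard : (P.card : ℝ) = (d.choose s : ℝ) := by
      rw [hP, Finset.card_powersetCard, Finset.card_univ, Fintype.card_fin]
    calc ∑ J ∈ P, ∑ I ∈ P, lam ^ (I ∩ J).card
        ≤ ∑ J ∈ P, (d.choose s : ℝ) * ((s:ℝ)/(d:ℝ) * (lam - 1) + 1) ^ s := by
          refine Finset.sum_le_sum fun J hJ => ?_
          have hJcard : J.card = s := (Finset.mem_powersetCard.mp hJ).2
          exact sum_lam_bound s d hs hsd lam hlam1 J hJcard
      _ = (d.choose s : ℝ) * ((d.choose s : ℝ) * ((s:ℝ)/(d:ℝ) * (lam - 1) + 1) ^ s) := by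
          rw [Finset.sum_const, nsmul_eq_mul, hcard]
  have hCne : (d.choose s : ℝ) ≠ 0 := ne_of_gt hCpos
  have heq : (1 - (s : ℝ) / (d : ℝ) + ((s : ℝ) / (d : ℝ)) * lam) ^ s
      = ((s:ℝ)/(d:ℝ) * (lam - 1) + 1) ^ s := by
    congr 1; ring
  rw [heq]
  calc Cinv * Cinv * ∑ J ∈ P, ∑ I ∈ P, lam ^ (I ∩ J).card
      ≤ Cinv * Cinv * ((d.choose s : ℝ) * ((d.choose s : ℝ) *
          ((s:ℝ)/(d:ℝ) * (lam - 1) + 1) ^ s)) := by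
        exact mul_le_mul_of_nonneg_left hbound (mul_nonneg hCinv0 hCinv0)
    _ = ((s:ℝ)/(d:ℝ) * (lam - 1) + 1) ^ s := by
        rw [hCinv]
        field_simp
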